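/- Let F be an idempotent m×m matrix over a commutative ring A, and write det(Id_m + (T-1)·F) = Σ_{i=0}^m e_i T^i in A[T]. Then the coefficients e_0, …, e_m form a basic system of orthogonal idempotents: each e_i is idempotent, e_i·e_j = 0 for i ≠ j, and Σ e_i = 1. -/

import Mathlib

open Polynomial

section Aux
variable {A : Type*} [CommRing A] {m : ℕ}

private lemma idemp_aux (F : Matrix (Fin m) (Fin m) A) (hF : F * F = F)
    {R : Type*} [CommRing R] (f : A →+* R) (s t : R) :
    (1 + (s - 1) • F.map f) * (1 + (t - 1) • F.map f)
      = 1 + (s * t - 1) • F.map f := by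
  have hG : F.map f * F.map f = F.map f := by
    rw [← Matrix.map_mul, hF]
  rw [mul_add, add_mul, add_mul, mul_one, one_mul, smul_mul_smul_comm, hG]
  rw [mul_one, ← add_assoc, add_assoc (1:Matrix (Fin m) (Fin m) R), ← add_smul,
    add_assoc (1:Matrix (Fin m) (Fin m) R), ← add_smul]
  congr 1
  ring_nf

private lemma map_matrix_aux (F : Matrix (Fin m) (Fin m) A)
    {R : Type*} [CommRing R] [Algebra A R] (t : R) :
    ((1 : Matrix (Fin m) (Fin m) (Polynomial A)) + (X - 1 : Polynomial A) • F.map C).map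
        (aeval t) =
      1 + (t - 1) • F.map (algebraMap A R) := by
  ext i j
  simp [Matrix.map_apply, Matrix.one_apply, Matrix.add_apply, Matrix.smul_apply, apply_ite]

private lemma aeval_det (F : Matrix (Fin m) (Fin m) A)
    {R : Type*} [CommRing R] [Algebra A R] (t : R) :
    aeval t ((1 : Matrix (Fin m) (Fin m) (Polynomial A)) + (X - 1 : Polynomial A) • F.map C).det
      = (1 + (t - 1) • F.map (algebraMap A R)).det := by
  rw [← map_matrix_aux F t, ← RingHom.mapMatrix_apply]
  exact RingHom.map_det ((aeval t : Polynomial A →ₐ[A] R) : Polynomial A →+* R) _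

private lemma aeval_CX (p : Polynomial A) :
    aeval (C X : Polynomial (Polynomial A)) p = C p := by
  induction p using Polynomial.induction_on' with
  | add p q hp hq => simp [hp, hq]
  | monomial n a =>
      have halg : (algebraMap A (Polynomial (Polynomial A))) a = C (C a) := by
        simp [Polynomial.algebraMap_apply]
      rw [aeval_monomial, halg, ← C_pow, ← C_mul, C_mul_X_pow_eq_monomial]

private lemma coeff_coeff_aux (p : Polynomial A) (i j : ℕ) :
    ((aeval (C X * X : Polynomial (Polynomial A)) p).coeff j).coeff i
      = if i = j then p.coeff j else 0 := by
  induction p using Polynomial.induction_on' with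
  | add p q hp hq => simp only [map_add, coeff_add, hp, hq]; split <;> simp
  | monomial n a =>
      have halg : (algebraMap A (Polynomial (Polynomial A))) a = C (C a) := by
        simp [Polynomial.algebraMap_apply]
      rw [aeval_monomial, halg, mul_pow, ← C_pow, ← mul_assoc, ← C_mul]
      by_cases h : j = n
      · subst h
        rw [coeff_C_mul, coeff_X_pow, if_pos rfl, mul_one, coeff_C_mul, coeff_X_pow,
          coeff_monomial, if_pos rfl]
        by_cases hi : i = j <;> simp [hi]
      · rw [coeff_C_mul, coeff_X_pow, if_neg h, mul_zero, coeff_zero]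
        simp [coeff_monomial, Ne.symm h]

end Aux

/-- For an idempotent `m × m` matrix `F`, the coefficients of
`P_F(T) = det(Id + (T-1)·F)` form a basic system of orthogonal idempotents. -/
theorem coeff_charlike_poly_orthogonal_idempotents {A : Type*} [CommRing A] {m : ℕ}
    (F : Matrix (Fin m) (Fin m) A) (hF : F * F = F) :
    let P : Polynomial A :=
      ((1 : Matrix (Fin m) (Fin m) (Polynomial A)) + ((X - 1 : Polynomial A)) • F.map C).det
    (∀ i ≤ m, IsIdempotentElem (P.coeff i)) ∧
    (∀ i ≤ m, ∀ j ≤ m, i ≠ j → P.coeff i * P.coeff j = 0) ∧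
    (∑ i ∈ Finset.range (m + 1), P.coeff i = 1) := by
  intro P
  have hXP : aeval (X : Polynomial (Polynomial A)) P = P.map C := by
    induction P using Polynomial.induction_on' with
    | add p q hp hq => simp [hp, hq]
    | monomial n a =>
        rw [aeval_monomial, map_monomial]
        simp [Polynomial.algebraMap_apply, ← C_mul_X_pow_eq_monomial]
  have key : (C P) * (P.map C)
      = aeval (C X * X : Polynomial (Polynomial A)) P := by
    rw [← aeval_CX P, ← hXP, aeval_det, aeval_det, aeval_det, ← Matrix.det_mul, idemp_aux F hF]
  have rel : ∀ i j : ℕ, P.coeff i * P.coeff j = if i = j then P.coeff j else 0 := by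
    intro i j
    have h := congrArg (fun q : Polynomial (Polynomial A) => (q.coeff j).coeff i) key
    simp only [coeff_C_mul, coeff_map, coeff_mul_C, coeff_coeff_aux] at h
    exact h
  have hdeg : P.natDegree ≤ m := by
    have hentry : ∀ i j : Fin m,
        ((((1 : Matrix (Fin m) (Fin m) (Polynomial A)) + (X - 1 : Polynomial A) • F.map C)) i j).natDegree ≤ 1 := by
      intro i j
      refine (natDegree_add_le _ _).trans ?_
      simp only [Matrix.one_apply, Matrix.smul_apply, Matrix.map_apply, smul_eq_mul]
      have h1 : (if i = j then (1:Polynomial A) else 0).natDegree = 0 := by split <;> simp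
      have h2 : ((X - 1 : Polynomial A) * C (F i j)).natDegree ≤ 1 := by
        refine natDegree_mul_le.trans ?_
        have := (natDegree_sub_le (X : Polynomial A) 1).trans
          (max_le natDegree_X_le (by simp))
        simpa using this
      exact max_le ((le_of_eq h1).trans (Nat.zero_le 1)) h2
    rw [show P = ((1 : Matrix (Fin m) (Fin m) (Polynomial A)) + (X - 1 : Polynomial A) • F.map C).det from rfl, Matrix.det_apply']
    refine natDegree_sum_le_of_forall_le _ _ (fun σ _ => ?_)
    refine natDegree_mul_le.trans ?_
    have h3 : (Equiv.Perm.sign σ : Polynomial A).natDegree = 0 := by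
      rcases Int.units_eq_one_or (Equiv.Perm.sign σ) with h | h <;> simp [h]
    have h4 : (∏ i, (((1 : Matrix (Fin m) (Fin m) (Polynomial A)) + (X - 1 : Polynomial A) • F.map C)) (σ i) i).natDegree ≤ m := by
      refine (natDegree_prod_le _ _).trans ?_
      calc (∑ i, ((((1 : Matrix (Fin m) (Fin m) (Polynomial A)) + (X - 1 : Polynomial A) • F.map C)) (σ i) i).natDegree)
          ≤ ∑ _i : Fin m, 1 := Finset.sum_le_sum (fun i _ => hentry (σ i) i)
        _ = m := by simp
    omega
  have heval : P.eval 1 = 1 := by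
    have h := aeval_det F (R := A) (1 : A)
    simp only [sub_self, zero_smul, add_zero, Matrix.det_one] at h
    rwa [← coe_aeval_eq_eval]
  refine ⟨fun i _ => by simpa [IsIdempotentElem] using rel i i,
    fun i _ j _ hij => by simpa [hij] using rel i j, ?_⟩
  rw [eval_eq_sum_range' (Nat.lt_succ_of_le hdeg) (1 : A)] at heval
  simpa using heval
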